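/- Let w ∈ W̃_n and let i < j be integers forming a d-antichain of w, i.e. j − n < i and w(j) − n < w(i) < w(j). Then for all integers a, b, the two integers i + an and j + bn never form a d-chain of w; explicitly, if x < y are the elements of {i + an, j + bn} arranged in increasing order, then w(x) < w(y). -/

import Mathlib

/-- A bijection of `ℤ` satisfying the periodicity `σ(i + n) = σ(i) + n`. -/
def IsAff (n : ℕ) (σ : ℤ → ℤ) : Prop :=
  Function.Bijective σ ∧ ∀ i : ℤ, σ (i + (n : ℤ)) = σ i + (n : ℤ)

lemma aff_shift {n : ℕ} {w : ℤ → ℤ} (hw : IsAff n w) (x k : ℤ) :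
    w (x + k * n) = w x + k * n := by
  induction k using Int.induction_on with
  | zero => simp
  | succ m ih =>
      have e : x + ((m : ℤ) + 1) * n = x + m * n + n := by ring
      rw [e, hw.2, ih]; ring
  | pred m ih =>
      have h := hw.2 (x + (-(m:ℤ) - 1) * n)
      have e : x + (-(m:ℤ) - 1) * n + n = x + -(m:ℤ) * n := by ring
      rw [e] at h
      rw [ih] at h
      linarith

/-- Half of Lemma 2.4.1: if `(i, j)` is a d-antichain of `w` of length 2, then
for all `a, b` the integers `i + an` and `j + bn` never form a d-chain of `w`:
arranging them in increasing order `x < y`, one has `w(x) < w(y)`. -/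
theorem stmt11 (n : ℕ) (hn : 2 ≤ n) (w : ℤ → ℤ) (hw : IsAff n w) (i j : ℤ)
    (hij : i < j) (h1 : j - n < i) (h2 : w j - n < w i) (h3 : w i < w j) (a b : ℤ) :
    w (min (i + a * n) (j + b * n)) < w (max (i + a * n) (j + b * n)) := by
  have hi := aff_shift hw i a
  have hj := aff_shift hw j b
  have hnpos : (0:ℤ) < n := by exact_mod_cast Nat.lt_of_lt_of_le Nat.zero_lt_two hn
  rcases lt_trichotomy (i + a * n) (j + b * n) with h | h | h
  · rw [min_eq_left h.le, max_eq_right h.le, hi, hj]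
    -- need w i + a n < w j + b n
    have hba : 0 ≤ b - a := by
      by_contra hc
      push_neg at hc
      have : b - a ≤ -1 := by omega
      nlinarith
    nlinarith
  · exfalso
    have : j - i = (a - b) * n := by linarith
    have h0 : 0 < j - i := by linarith
    have h1' : j - i < n := by linarith
    rcases lt_trichotomy (a - b) 0 with hab | hab | hab
    · have : (a - b) * n ≤ -n := by nlinarith [Int.le_sub_one_iff.mpr hab]
      omega
    · simp [hab] at this; omega
    · have : (n:ℤ) ≤ (a - b) * n := by nlinarith [Int.add_one_le_iff.mpr hab]
      omega
  · rw [min_eq_right h.le, max_eq_left h.le, hi, hj]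
    have hab : 1 ≤ a - b := by
      by_contra hc
      push_neg at hc
      have : a - b ≤ 0 := by omega
      nlinarith
    nlinarith
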